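/- Let G be an absolutely convex subset of a locally convex space E, X a Tychonoff first countable space, {U_n}_{n<N} (1 < N ≤ ∞) a pairwise disjoint family of open subsets of X with points x_n ∈ U_n, and elements g_1, g_2, …, g_N ∈ G. Then the function f defined by f(x_k) = g_k for k < N and f(x) = g_N for x ∉ {x_k : k < N} is a pointwise limit of continuous functions from X to G; in particular f ∈ B_1(X,G). -/

import Mathlib

open Filter Topology

/-- Let `G` be an absolutely convex subset of a locally convex space `E`, `X` a Tychonoff
first countable space, `(U i)` a pairwise disjoint family (indexed by a countable type) of
open sets with `x i ∈ U i`, and `g i, g' ∈ G`. Then the function equal to `g i` at `x i`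
and to `g'` elsewhere is a pointwise limit of continuous `G`-valued functions, i.e. it
belongs to `B₁(X, G)`. -/
theorem stmt12 {E : Type*} [AddCommGroup E] [Module ℝ E] [TopologicalSpace E]
    [IsTopologicalAddGroup E] [ContinuousSMul ℝ E] [LocallyConvexSpace ℝ E]
    (G : Set E)
    (hG : ∀ g ∈ G, ∀ h ∈ G, ∀ α β : ℝ, |α| + |β| ≤ 1 → α • g + β • h ∈ G)
    {X : Type*} [TopologicalSpace X] [CompletelyRegularSpace X] [T2Space X]
    [FirstCountableTopology X]
    {ι : Type*} [Countable ι]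
    (U : ι → Set X) (hUo : ∀ i, IsOpen (U i))
    (hdisj : ∀ i j, i ≠ j → Disjoint (U i) (U j))
    (x : ι → X) (hx : ∀ i, x i ∈ U i)
    (g : ι → E) (hg : ∀ i, g i ∈ G) (g' : E) (hg' : g' ∈ G)
    (f : X → E) (hf1 : ∀ i, f (x i) = g i)
    (hf2 : ∀ y, y ∉ Set.range x → f y = g') :
    ∃ F : ℕ → X → E, (∀ n, Continuous (F n) ∧ ∀ y, F n y ∈ G) ∧
      ∀ y, Tendsto (fun n => F n y) atTop (𝓝 (f y)) := by
  obtain ⟨e, he⟩ := exists_injective_nat ι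
  have hV : ∀ i, ∃ V : ℕ → Set X, (𝓝 (x i)).HasAntitoneBasis V := fun i =>
    (𝓝 (x i)).exists_antitone_basis
  choose V hVb using hV
  have key : ∀ i n, ∃ ψ : X → ℝ, Continuous ψ ∧ ψ (x i) = 1 ∧
      (∀ y, ψ y ∈ Set.Icc (0:ℝ) 1) ∧ ∀ y, y ∉ U i ∩ interior (V i n) → ψ y = 0 := by
    intro i n
    have hK : IsClosed (U i ∩ interior (V i n))ᶜ :=
      ((hUo i).inter isOpen_interior).isClosed_compl
    have hxK : x i ∉ (U i ∩ interior (V i n))ᶜ := by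
      simp only [Set.mem_compl_iff, not_not]
      exact ⟨hx i, mem_interior_iff_mem_nhds.2 ((hVb i).toHasBasis.mem_of_mem trivial)⟩
    obtain ⟨φ, hφc, hφx, hφK⟩ := CompletelyRegularSpace.completely_regular (x i) _ hK hxK
    refine ⟨fun y => 1 - (φ y : ℝ), by continuity, by simp [hφx], fun y => ?_, fun y hy => ?_⟩
    · have := (φ y).2
      constructor <;> simp only [Set.mem_Icc] at this ⊢ <;> linarith [this.1, this.2]
    · have : φ y = 1 := hφK hy
      simp [this]
  choose ψ hψc hψx hψ01 hψ0 using key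
  set s : ℕ → Finset ι := fun n => (Finset.range n).preimage e he.injOn with hs
  set F : ℕ → X → E := fun n y => g' + ∑ i ∈ s n, ψ i n y • (g i - g') with hF
  have hmem : ∀ n y, F n y ∈ G := by
    intro n y
    by_cases h : ∃ i₀ ∈ s n, ψ i₀ n y ≠ 0
    · obtain ⟨i₀, hi₀, hne⟩ := h
      have hyU : y ∈ U i₀ := by
        by_contra hyU
        exact hne (hψ0 i₀ n y (fun hmem => hyU hmem.1))
      have hsum : ∑ i ∈ s n, ψ i n y • (g i - g') = ψ i₀ n y • (g i₀ - g') := by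
        refine Finset.sum_eq_single_of_mem i₀ hi₀ (fun j _ hj => ?_)
        have : ψ j n y = 0 := hψ0 j n y (fun hmem =>
          (hdisj j i₀ hj).ne_of_mem hmem.1 hyU rfl)
        simp [this]
      have heq : F n y = (1 - ψ i₀ n y) • g' + ψ i₀ n y • g i₀ := by
        simp only [hF]; rw [hsum, smul_sub, sub_smul, one_smul]; abel
      rw [heq]
      have h01 := hψ01 i₀ n y
      refine hG g' hg' (g i₀) (hg i₀) _ _ ?_
      rw [abs_of_nonneg (by linarith [h01.2]), abs_of_nonneg h01.1]; linarith
    · push_neg at h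
      have : F n y = g' := by
        rw [hF]; simp only [add_eq_left]
        exact Finset.sum_eq_zero fun i hi => by simp [h i hi]
      rw [this]
      have := hG g' hg' g' hg' 1 0 (by norm_num)
      simpa using this
  refine ⟨F, fun n => ⟨?_, hmem n⟩, fun y => ?_⟩
  · exact continuous_const.add (continuous_finset_sum _ fun i _ =>
      ((hψc i n).smul continuous_const))
  · have : ∀ᶠ n in atTop, F n y = f y := by
      by_cases hy : y ∈ Set.range x
      · obtain ⟨i₀, rfl⟩ := hy
        filter_upwards [eventually_gt_atTop (e i₀)] with n hn
        have hi₀ : i₀ ∈ s n := by simp [hs, Finset.mem_preimage, hn]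
        have hsum : ∑ i ∈ s n, ψ i n (x i₀) • (g i - g') = g i₀ - g' := by
          rw [Finset.sum_eq_single_of_mem i₀ hi₀ (fun j _ hj => by
            have : ψ j n (x i₀) = 0 := hψ0 j n (x i₀) (fun hmem =>
              (hdisj j i₀ hj).ne_of_mem hmem.1 (hx i₀) rfl)
            simp [this])]
          rw [hψx i₀ n, one_smul]
        rw [hF]; simp only [hsum, hf1 i₀]; abel
      · rw [hf2 y hy]
        by_cases hyU : ∃ i₀, y ∈ U i₀
        · obtain ⟨i₀, hyU₀⟩ := hyU
          have hyne : y ≠ x i₀ := fun h => hy ⟨i₀, h.symm⟩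
          have : ∀ᶠ n in atTop, V i₀ n ⊆ {z | z ≠ y} := by
            have : {z | z ≠ y} ∈ 𝓝 (x i₀) :=
              (isOpen_ne).mem_nhds (fun h => hyne h.symm)
            exact (hVb i₀).eventually_subset this
          filter_upwards [this] with n hn
          have hF0 : ∀ i ∈ s n, ψ i n y • (g i - g') = 0 := by
            intro i hi
            rcases eq_or_ne i i₀ with rfl | hne
            · have : ψ i n y = 0 := hψ0 i n y (fun hmem => by
                have := interior_subset hmem.2
                exact hn this rfl)
              simp [this]
            · have : ψ i n y = 0 := hψ0 i n y (fun hmem =>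
                (hdisj i i₀ hne).ne_of_mem hmem.1 hyU₀ rfl)
              simp [this]
          rw [hF]; simp only [Finset.sum_eq_zero hF0, add_zero]
        · push_neg at hyU
          filter_upwards with n
          have hF0 : ∀ i ∈ s n, ψ i n y • (g i - g') = 0 := fun i _ => by
            have : ψ i n y = 0 := hψ0 i n y (fun hmem => hyU i hmem.1)
            simp [this]
          rw [hF]; simp only [Finset.sum_eq_zero hF0, add_zero]
    exact Tendsto.congr' (EventuallyEq.symm (this : (fun n => F n y) =ᶠ[atTop] fun _ => f y)) tendsto_const_nhds
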